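/- Let E be an elliptic curve over a field K with char(K) ≠ 3, P ∈ E(K) non-torsion, and R a point with 3R = P such that [K(x(R)):K] ≤ 2. Then R is defined over K(x(R)), i.e., y(R) ∈ K(x(R)), so P has a preimage under multiplication by 3 defined over an extension of degree at most 2. -/

import Mathlib

open WeierstrassCurve WeierstrassCurve.Affine Polynomial

open scoped Classical

universe u

private lemma some_eq_some' {F : Type u} [Field F] {W : Affine F} {x₁ x₂ y₁ y₂ : F}
    (h₁ : W.Nonsingular x₁ y₁) (h₂ : W.Nonsingular x₂ y₂) (hx : x₁ = x₂) (hy : y₁ = y₂) :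
    Point.some _ _ h₁ = Point.some _ _ h₂ := by subst hx; subst hy; rfl

open IntermediateField in
private lemma aux16 {K F L : Type u} [Field K] [Field F] [Field L]
    [Algebra K F] [Algebra K L] [Algebra F L] [IsScalarTower K F L]
    (E : WeierstrassCurve K) {x y : L}
    (h : (E.baseChange L).toAffine.Nonsingular x y)
    (P : Affine.Point (E.baseChange K)) (hP : 2 • P ≠ 0)
    (hR : 3 • (Point.some _ _ h) = Point.baseChange (W' := E) K L P)
    (xF : F) (hx : algebraMap F L xF = x) :
    ∃ yF : F, algebraMap F L yF = y := by
  by_contra hy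
  push_neg at hy
  -- the Weierstrass equation over L
  have hE : y ^ 2 + algebraMap K L E.a₁ * x * y + algebraMap K L E.a₃ * y
      = x ^ 3 + algebraMap K L E.a₂ * x ^ 2 + algebraMap K L E.a₄ * x + algebraMap K L E.a₆ := by
    have := ((equation_iff _ _).mp h.1)
    simpa [WeierstrassCurve.baseChange] using this
  -- the quadratic over F
  set b : F := algebraMap K F E.a₁ * xF + algebraMap K F E.a₃ with hb
  set c : F := xF ^ 3 + algebraMap K F E.a₂ * xF ^ 2 + algebraMap K F E.a₄ * xF
      + algebraMap K F E.a₆ with hc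
  set q : F[X] := X ^ 2 + C b * X - C c with hq
  have hmapb : algebraMap F L b = algebraMap K L E.a₁ * x + algebraMap K L E.a₃ := by
    simp [hb, map_add, map_mul, ← IsScalarTower.algebraMap_apply, hx]
  have hmapc : algebraMap F L c = x ^ 3 + algebraMap K L E.a₂ * x ^ 2
      + algebraMap K L E.a₄ * x + algebraMap K L E.a₆ := by
    simp [hc, map_add, map_mul, map_pow, ← IsScalarTower.algebraMap_apply, hx]
  have hqy : (aeval y) q = 0 := by
    simp only [hq, map_sub, map_add, map_mul, map_pow, aeval_X, aeval_C, hmapb, hmapc]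
    linear_combination hE
  have hqmonic : q.Monic := by
    have : q = C 1 * X ^ 2 + C b * X + C (-c) := by rw [map_neg, C_1]; ring
    rw [Monic, this, Polynomial.leadingCoeff_quadratic one_ne_zero]
  have hqdeg : q.natDegree = 2 := by
    have : q = C 1 * X ^ 2 + C b * X + C (-c) := by rw [map_neg, C_1]; ring
    rw [this, Polynomial.natDegree_quadratic one_ne_zero]
  have hint : IsIntegral F y := ⟨q, hqmonic, by rwa [← aeval_def]⟩
  have hdvd : minpoly F y ∣ q := minpoly.dvd F y hqy
  have hmd : (minpoly F y).natDegree = 2 := by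
    have h2 : (minpoly F y).natDegree ≤ 2 :=
      hqdeg ▸ Polynomial.natDegree_le_of_dvd hdvd hqmonic.ne_zero
    have h0 : 0 < (minpoly F y).natDegree := minpoly.natDegree_pos hint
    have h1 : (minpoly F y).natDegree ≠ 1 := by
      intro h1
      have hdeg1 : (minpoly F y).degree = 1 := by
        rw [Polynomial.degree_eq_natDegree (minpoly.ne_zero hint), h1]; rfl
      obtain ⟨z, hz⟩ := (minpoly.degree_eq_one_iff).mp hdeg1
      exact hy z hz
    omega
  have hqmin : minpoly F y = q :=
    (Polynomial.eq_of_monic_of_dvd_of_natDegree_le (minpoly.monic hint) hqmonic hdvd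
      (by rw [hqdeg, hmd])).symm
  -- the quadratic extension F⟮y⟯
  letI : Algebra K ↥F⟮y⟯ := ((algebraMap F ↥F⟮y⟯).comp (algebraMap K F)).toAlgebra
  letI : IsScalarTower K F ↥F⟮y⟯ := IsScalarTower.of_algebraMap_eq fun _ => rfl
  letI : IsScalarTower K ↥F⟮y⟯ L := IsScalarTower.of_algebraMap_eq fun a => by
    rw [IsScalarTower.algebraMap_apply K F L a,
      show algebraMap K ↥F⟮y⟯ a = algebraMap F ↥F⟮y⟯ (algebraMap K F a) from rfl,
      ← IsScalarTower.algebraMap_apply F ↥F⟮y⟯ L]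
  letI : IsScalarTower K K ↥F⟮y⟯ := IsScalarTower.of_algebraMap_eq fun a => by
    rw [Algebra.algebraMap_self_apply]
  set xq : ↥F⟮y⟯ := algebraMap F ↥F⟮y⟯ xF with hxq
  set yq : ↥F⟮y⟯ := AdjoinSimple.gen F y with hyq
  set y2 : ↥F⟮y⟯ := (E.baseChange ↥F⟮y⟯).toAffine.negY xq yq with hy2
  set ι : ↥F⟮y⟯ →ₐ[K] L := IsScalarTower.toAlgHom K ↥F⟮y⟯ L with hι
  have hιx : ι xq = x := by
    rw [hxq]
    show algebraMap ↥F⟮y⟯ L (algebraMap F ↥F⟮y⟯ xF) = x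
    rw [← IsScalarTower.algebraMap_apply, hx]
  have hιy : ι yq = y := AdjoinSimple.algebraMap_gen F y
  have hιy2 : ι y2 = (E.baseChange L).toAffine.negY x y := by
    rw [hy2]
    show algebraMap ↥F⟮y⟯ L _ = _
    rw [show (algebraMap ↥F⟮y⟯ L) ((E.baseChange ↥F⟮y⟯).toAffine.negY xq yq)
        = (ι : ↥F⟮y⟯ →ₐ[K] L) ((E.baseChange ↥F⟮y⟯).toAffine.negY xq yq) from rfl,
      ← baseChange_negY (W' := E) ι xq yq, hιx, hιy]
  have hnsq : (E.baseChange ↥F⟮y⟯).toAffine.Nonsingular xq yq :=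
    (baseChange_nonsingular (W := E) (f := ι) ι.injective xq yq).mp
      (by rw [hιx, hιy]; exact h)
  set Rq := Point.some _ _ hnsq with hRq
  have hmapR : Point.map (W' := E) ι Rq = Point.some _ _ h := by
    rw [hRq, Point.map_some]
    exact some_eq_some' _ _ hιx hιy
  have h3 : 3 • Rq = Point.baseChange (W' := E) K ↥F⟮y⟯ P := by
    apply Point.map_injective (W' := E) ι
    rw [map_nsmul, hmapR, Point.map_baseChange]
    exact hR
  set pb := IntermediateField.adjoin.powerBasis hint with hpb
  have hy2root : (aeval y2) (minpoly F pb.gen) = 0 := by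
    have hgen : pb.gen = AdjoinSimple.gen F y := rfl
    rw [hgen, minpoly_gen, hqmin]
    apply (algebraMap ↥F⟮y⟯ L).injective
    rw [map_zero]
    have key : (algebraMap ↥F⟮y⟯ L) ((aeval y2) q)
        = aeval ((IsScalarTower.toAlgHom F ↥F⟮y⟯ L) y2) q :=
      (aeval_algHom_apply (IsScalarTower.toAlgHom F ↥F⟮y⟯ L) y2 q).symm
    rw [key]
    have : (IsScalarTower.toAlgHom F ↥F⟮y⟯ L) y2 = (E.baseChange L).toAffine.negY x y := hιy2
    rw [this]
    have hnegY : (E.baseChange L).toAffine.negY x y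
        = -y - algebraMap K L E.a₁ * x - algebraMap K L E.a₃ := by
      simp [negY, WeierstrassCurve.baseChange]
    rw [hnegY]
    simp only [hq, map_sub, map_add, map_mul, map_pow, aeval_X, aeval_C, hmapb, hmapc]
    linear_combination hE
  set σ : ↥F⟮y⟯ →ₐ[F] ↥F⟮y⟯ := pb.lift y2 hy2root with hσ
  have hσgen : σ yq = y2 := pb.lift_gen y2 hy2root
  set τ : ↥F⟮y⟯ →ₐ[K] ↥F⟮y⟯ := σ.restrictScalars K with hτ
  have hτR : Point.map (W' := E) τ Rq = -Rq := by
    rw [hRq, Point.neg_some, Point.map_some]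
    refine some_eq_some' _ _ ?_ ?_
    · show σ xq = xq
      rw [hxq]; exact σ.commutes xF
    · show σ yq = (E.baseChange ↥F⟮y⟯).toAffine.negY xq yq
      rw [hσgen, hy2]
  have hPP : Point.baseChange (W' := E) K ↥F⟮y⟯ P = -(Point.baseChange (W' := E) K ↥F⟮y⟯ P) := by
    calc Point.baseChange (W' := E) K ↥F⟮y⟯ P
        = Point.map (W' := E) τ (Point.baseChange (W' := E) K ↥F⟮y⟯ P) := (Point.map_baseChange (W' := E) τ P).symm
      _ = Point.map (W' := E) τ (3 • Rq) := by rw [h3]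
      _ = 3 • (Point.map (W' := E) τ Rq) := map_nsmul _ _ _
      _ = 3 • (-Rq) := by rw [hτR]
      _ = -(3 • Rq) := smul_neg 3 Rq
      _ = -(Point.baseChange (W' := E) K ↥F⟮y⟯ P) := by rw [h3]
  have h2P : (2 : ℕ) • P = 0 := by
    apply Point.map_injective (W' := E) (Algebra.ofId K ↥F⟮y⟯)
    rw [map_nsmul, map_zero]
    show (2 : ℕ) • Point.baseChange (W' := E) K ↥F⟮y⟯ P = 0
    rw [two_nsmul]
    nth_rewrite 2 [hPP]
    exact add_neg_cancel _
  exact hP h2P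

/-- A model of an isogeny defined over `K` between elliptic curves given by Weierstrass
models `E` and `E'` over `K`, of degree `d`: a compatible family of group homomorphisms on
points over every field extension of `K`, whose kernel over any algebraically closed
extension of `K` is finite of cardinality `d`. -/
structure KIsogeny (K : Type u) [Field K] (E E' : WeierstrassCurve K) (d : ℕ) where
  hom : ∀ (L : Type u) [Field L] [Algebra K L], Affine.Point (E.baseChange L) →+ Affine.Point (E'.baseChange L)
  compat : ∀ (L : Type u) [Field L] [Algebra K L] (M : Type u) [Field M] [Algebra K M]
    (f : L →ₐ[K] M) (P : Affine.Point (E.baseChange L)),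
      hom M (Point.map (W' := E) f P) = Point.map (W' := E') f (hom L P)
  card_ker : ∀ (L : Type u) [Field L] [Algebra K L] [IsAlgClosed L],
      Nat.card (AddMonoidHom.ker (hom L)) = d

/-- If `3R = P` with `P` non-torsion and `[K(x(R)) : K] ≤ 2`, then `R` is defined over
`K(x(R))`: `y(R) ∈ K(x(R))`, so `P` has a `3`-division preimage over an extension of degree
at most `2`. -/
theorem stmt16 (K : Type u) [Field K] (hchar3 : ringChar K ≠ 3)
    (E : WeierstrassCurve K) [E.IsElliptic]
    (P : Affine.Point (E.baseChange K)) (hP : ∀ n : ℕ, n ≠ 0 → n • P ≠ 0)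
    (L : Type u) [Field L] [Algebra K L]
    (x y : L) (h : (E.baseChange L).toAffine.Nonsingular x y)
    (R : Affine.Point (E.baseChange L)) (hReq : R = Point.some x y h)
    (hR : 3 • R = Point.baseChange (W' := E) K L P)
    (hdeg : Module.finrank K (IntermediateField.adjoin K ({x} : Set L)) ≤ 2) :
    y ∈ IntermediateField.adjoin K ({x} : Set L) ∧
      ∃ (M : IntermediateField K L) (R' : Affine.Point (E.baseChange ↥M)),
        Module.finrank K ↥M ≤ 2 ∧ Point.map (W' := E) M.val R' = R ∧
          3 • R' = Point.baseChange (W' := E) K ↥M P := by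
  set F := IntermediateField.adjoin K ({x} : Set L) with hF
  have hxF : x ∈ F := IntermediateField.subset_adjoin K _ rfl
  have hR' : 3 • Point.some _ _ h = Point.baseChange (W' := E) K L P := by rw [← hReq]; exact hR
  obtain ⟨yF, hyF⟩ := aux16 (F := ↥F) E h P (hP 2 two_ne_zero) hR' ⟨x, hxF⟩ rfl
  have hyFmem : y ∈ F := by rw [← hyF]; exact yF.2
  refine ⟨hyFmem, F, ?_⟩
  have hval : ∀ z : ↥F, F.val z = (z : L) := fun _ => rfl
  have hnsF : (E.baseChange ↥F).toAffine.Nonsingular ⟨x, hxF⟩ ⟨y, hyFmem⟩ :=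
    (baseChange_nonsingular (W := E) (f := F.val) F.val.injective _ _).mp h
  refine ⟨Point.some _ _ hnsF, hdeg, ?_, ?_⟩
  · rw [Point.map_some, hReq]
    rfl
  · apply Point.map_injective (W' := E) F.val
    rw [map_nsmul, Point.map_some, Point.map_baseChange, ← hR, hReq]
    rfl
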